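/- Let X be a deck of n = a+b+c cards (a,b,c ≥ 1) and suppose an announcement 𝒜 is a t-(n,a,λ)-design with λ ≥ 1, c ≤ t−1 and t ≤ a. Then 𝒜 satisfies the perfect (t−c)-security condition: for every c-element subset H_C ⊆ X and every nonempty Y ⊆ X∖H_C with |Y| = δ' ≤ t−c, one has C(a+b,δ')·|{H ∈ P(H_C,𝒜) : Y ⊆ H}| = C(a,δ')·|P(H_C,𝒜)|, where C denotes the binomial coefficient. -/

import Mathlib

open Finset

/-- Double counting: in a `t-(n,a,λ)` design, the number of blocks containing a
fixed set `Y` of size `d ≤ t` satisfies `C(a-d,t-d) * N = λ * C(n-d,t-d)`. -/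
lemma base_count {α : Type*} [DecidableEq α] (X : Finset α) (a t lam : ℕ)
    (𝒜 : Finset (Finset α))
    (hhands : ∀ H ∈ 𝒜, H ⊆ X ∧ H.card = a)
    (hdesign : ∀ T ⊆ X, T.card = t → (𝒜.filter fun H => T ⊆ H).card = lam)
    (Y : Finset α) (hY : Y ⊆ X) (hd : Y.card ≤ t) :
    (a - Y.card).choose (t - Y.card) * (𝒜.filter fun H => Y ⊆ H).card
      = lam * (X.card - Y.card).choose (t - Y.card) := by
  set d := Y.card with hdd
  have key : ∑ T ∈ (X \ Y).powersetCard (t - d), (𝒜.filter fun H => Y ∪ T ⊆ H).card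
      = lam * (X.card - d).choose (t - d) := by
    rw [Finset.sum_congr rfl (fun T hT => ?_), Finset.sum_const, card_powersetCard,
      card_sdiff_of_subset hY, smul_eq_mul, mul_comm]
    rw [mem_powersetCard] at hT
    apply hdesign
    · exact union_subset hY (hT.1.trans sdiff_subset)
    · have hdisj : Disjoint Y T := (sdiff_disjoint.mono_left hT.1).symm
      rw [card_union_of_disjoint hdisj, hT.2]
      omega
  rw [← key]
  have key2 : ∑ T ∈ (X \ Y).powersetCard (t - d), (𝒜.filter fun H => Y ∪ T ⊆ H).card
      = ∑ H ∈ 𝒜, if Y ⊆ H then (a - d).choose (t - d) else 0 := by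
    simp_rw [Finset.card_filter]
    rw [Finset.sum_comm]
    apply Finset.sum_congr rfl
    intro H hH
    by_cases hYH : Y ⊆ H
    · simp only [hYH, if_true, union_subset_iff, true_and]
      rw [← Finset.card_filter]
      have hfil : ((X \ Y).powersetCard (t - d)).filter (fun T => T ⊆ H)
          = (H \ Y).powersetCard (t - d) := by
        ext T
        simp only [mem_filter, mem_powersetCard]
        constructor
        · rintro ⟨⟨hTX, hTc⟩, hTH⟩
          exact ⟨fun x hx => mem_sdiff.2 ⟨hTH hx, (mem_sdiff.1 (hTX hx)).2⟩, hTc⟩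
        · rintro ⟨hTH, hTc⟩
          refine ⟨⟨fun x hx => ?_, hTc⟩, fun x hx => (mem_sdiff.1 (hTH hx)).1⟩
          have := mem_sdiff.1 (hTH hx)
          exact mem_sdiff.2 ⟨(hhands H hH).1 this.1, this.2⟩
      rw [hfil, card_powersetCard, card_sdiff_of_subset hYH, (hhands H hH).2]
    · simp [union_subset_iff, hYH]
  rw [key2, ← Finset.sum_filter, Finset.sum_const, smul_eq_mul, mul_comm]

/-- Counting blocks containing `Y` and disjoint from `HC`, for `|Y| + |HC| ≤ t`:
`C(n-t,a-t) * N = λ * C(n-|Y|-|HC|, a-|Y|)`. -/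
lemma avoid_count {α : Type*} [DecidableEq α] (X : Finset α) (a t lam : ℕ)
    (hta : t ≤ a) (haX : a ≤ X.card)
    (𝒜 : Finset (Finset α))
    (hhands : ∀ H ∈ 𝒜, H ⊆ X ∧ H.card = a)
    (hdesign : ∀ T ⊆ X, T.card = t → (𝒜.filter fun H => T ⊆ H).card = lam) :
    ∀ e (Y HC : Finset α), Y ⊆ X → HC ⊆ X → Disjoint Y HC → HC.card = e →
      Y.card + e ≤ t →
      (X.card - t).choose (a - t) *
          (𝒜.filter fun H => Y ⊆ H ∧ Disjoint H HC).card
        = lam * (X.card - Y.card - e).choose (a - Y.card) := by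
  intro e
  induction e with
  | zero =>
    intro Y HC hYX hHCX hdisj hHCc hle
    have hHC : HC = ∅ := card_eq_zero.1 hHCc
    subst hHC
    simp only [disjoint_empty_right, and_true]
    have hd : Y.card ≤ t := by omega
    have hbase := base_count X a t lam 𝒜 hhands hdesign Y hYX hd
    set d := Y.card with hdd
    set n := X.card with hnn
    have hdn : d ≤ n := card_le_card hYX
    have hcm : (n - d).choose (a - d) * (a - d).choose (t - d)
        = (n - d).choose (t - d) * (n - t).choose (a - t) := by
      have h1 := Nat.choose_mul (n := n - d) (k := a - d) (s := t - d)
        (by omega)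
      have h2 : n - d - (t - d) = n - t := by omega
      have h3 : a - d - (t - d) = a - t := by omega
      rw [h2, h3] at h1
      exact h1
    have hpos : 0 < (a - d).choose (t - d) := Nat.choose_pos (by omega)
    apply Nat.eq_of_mul_eq_mul_left hpos
    calc (a - d).choose (t - d) * ((n - t).choose (a - t) *
            (𝒜.filter fun H => Y ⊆ H).card)
        = (n - t).choose (a - t) * ((a - d).choose (t - d) *
            (𝒜.filter fun H => Y ⊆ H).card) := by ring
      _ = (n - t).choose (a - t) * (lam * (n - d).choose (t - d)) := by rw [hbase]
      _ = lam * ((n - d).choose (t - d) * (n - t).choose (a - t)) := by ring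
      _ = lam * ((n - d).choose (a - d) * (a - d).choose (t - d)) := by rw [hcm]
      _ = (a - d).choose (t - d) * (lam * (n - 0 - d).choose (a - d)) := by
          rw [Nat.sub_zero]; ring
      _ = (a - d).choose (t - d) * (lam * (n - d - 0).choose (a - d)) := by
          rw [Nat.sub_zero, Nat.sub_zero]
  | succ e ih =>
    intro Y HC hYX hHCX hdisj hHCc hle
    obtain ⟨x, HC', hxHC', hins, hHC'c⟩ := card_eq_succ.1 hHCc
    subst hins
    have hxX : x ∈ X := hHCX (mem_insert_self x HC')
    have hHC'X : HC' ⊆ X := fun y hy => hHCX (mem_insert_of_mem hy)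
    have hxY : x ∉ Y := fun hxy => (disjoint_left.1 hdisj) hxy (mem_insert_self x HC')
    have hdisj' : Disjoint Y HC' :=
      hdisj.mono_right (fun y hy => mem_insert_of_mem hy)
    have hdisjx : Disjoint (insert x Y) HC' := by
      rw [disjoint_left]
      intro y hy hy'
      rcases mem_insert.1 hy with rfl | hy2
      · exact hxHC' hy'
      · exact (disjoint_left.1 hdisj') hy2 hy'
    have hinsX : insert x Y ⊆ X := insert_subset hxX hYX
    have hcard : (insert x Y).card = Y.card + 1 := card_insert_of_notMem hxY
    -- split the count
    have hsplit :
        (𝒜.filter fun H => insert x Y ⊆ H ∧ Disjoint H HC').card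
          + (𝒜.filter fun H => Y ⊆ H ∧ Disjoint H (insert x HC')).card
        = (𝒜.filter fun H => Y ⊆ H ∧ Disjoint H HC').card := by
      have h := Finset.card_filter_add_card_filter_not
        (s := 𝒜.filter fun H => Y ⊆ H ∧ Disjoint H HC') (p := fun H => x ∈ H)
      rw [Finset.filter_filter, Finset.filter_filter] at h
      have e1 : (𝒜.filter fun H => (Y ⊆ H ∧ Disjoint H HC') ∧ x ∈ H)
          = 𝒜.filter fun H => insert x Y ⊆ H ∧ Disjoint H HC' := by
        apply Finset.filter_congr
        intro H hH
        simp only [insert_subset_iff]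
        tauto
      have e2 : (𝒜.filter fun H => (Y ⊆ H ∧ Disjoint H HC') ∧ ¬ x ∈ H)
          = 𝒜.filter fun H => Y ⊆ H ∧ Disjoint H (insert x HC') := by
        apply Finset.filter_congr
        intro H hH
        simp only [disjoint_insert_right]
        tauto
      rw [e1, e2] at h
      exact h
    have h1 := ih Y HC' hYX hHC'X hdisj' hHC'c (by omega)
    have h2 := ih (insert x Y) HC' hinsX hHC'X hdisjx hHC'c (by omega)
    rw [hcard] at h2
    have hnt : t ≤ X.card := le_trans hta haX
    have hm : X.card - Y.card - e = (X.card - Y.card - (e + 1)) + 1 := by omega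
    have hk : a - Y.card = (a - (Y.card + 1)) + 1 := by omega
    have hm2 : X.card - (Y.card + 1) - e = X.card - Y.card - (e + 1) := by omega
    rw [hm2] at h2
    rw [hm, hk, Nat.choose_succ_succ', ← hsplit, Nat.mul_add, Nat.mul_add, h2] at h1
    rw [hk]
    exact Nat.add_left_cancel h1

/-- Theorem: if an announcement is a `t-(n,a,λ)`-design with `c ≤ t-1` and `t ≤ a`,
then it satisfies the perfect `(t-c)`-security condition. -/
theorem stmt_4 {α : Type*} [DecidableEq α] (X : Finset α) (a b c t lam : ℕ)
    (ha : 1 ≤ a) (hb : 1 ≤ b) (hc : 1 ≤ c)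
    (hX : X.card = a + b + c)
    (hlam : 1 ≤ lam) (hct : c + 1 ≤ t) (hta : t ≤ a)
    (𝒜 : Finset (Finset α))
    (hhands : ∀ H ∈ 𝒜, H ⊆ X ∧ H.card = a)
    (hdesign : ∀ T ⊆ X, T.card = t → (𝒜.filter fun H => T ⊆ H).card = lam) :
    ∀ HC ⊆ X, HC.card = c →
      ∀ Y ⊆ X \ HC, Y.Nonempty → Y.card ≤ t - c →
        (a + b).choose Y.card *
            (((𝒜.filter fun H => Disjoint H HC)).filter fun H => Y ⊆ H).card =
          a.choose Y.card * (𝒜.filter fun H => Disjoint H HC).card := by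
  intro HC hHCX hHCc Y hY hYne hYd
  have haX : a ≤ X.card := by omega
  have hYX : Y ⊆ X := hY.trans sdiff_subset
  have hdisj : Disjoint Y HC := sdiff_disjoint.mono_left hY
  set d := Y.card with hdd
  have hdc : d + c ≤ t := by omega
  have h1 := avoid_count X a t lam hta haX 𝒜 hhands hdesign c Y HC hYX hHCX hdisj hHCc hdc
  have h2 := avoid_count X a t lam hta haX 𝒜 hhands hdesign c ∅ HC (empty_subset X)
    hHCX (disjoint_empty_left HC) hHCc (by simpa using (by omega : 0 + c ≤ t))
  simp only [card_empty, empty_subset, true_and, Nat.sub_zero] at h2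
  have hfil1 : ((𝒜.filter fun H => Disjoint H HC).filter fun H => Y ⊆ H)
      = 𝒜.filter fun H => Y ⊆ H ∧ Disjoint H HC := by
    rw [Finset.filter_filter]
    apply Finset.filter_congr
    intro H hH
    tauto
  rw [hfil1]
  set n := X.card with hnn
  have he1 : n - d - c = a + b - d := by omega
  have he2 : n - c = a + b := by omega
  rw [he1] at h1
  rw [he2] at h2
  have hda : d ≤ a := by omega
  have hcm : (a + b).choose a * a.choose d
      = (a + b).choose d * (a + b - d).choose (a - d) := by
    have h := Nat.choose_mul (n := a + b) (k := a) (s := d) hda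
    exact h
  have hpos : 0 < (n - t).choose (a - t) := Nat.choose_pos (by omega)
  apply Nat.eq_of_mul_eq_mul_left hpos
  calc (n - t).choose (a - t) * ((a + b).choose d *
          (𝒜.filter fun H => Y ⊆ H ∧ Disjoint H HC).card)
      = (a + b).choose d * ((n - t).choose (a - t) *
          (𝒜.filter fun H => Y ⊆ H ∧ Disjoint H HC).card) := by ring
    _ = (a + b).choose d * (lam * (a + b - d).choose (a - d)) := by rw [h1]
    _ = lam * ((a + b).choose d * (a + b - d).choose (a - d)) := by ring
    _ = lam * ((a + b).choose a * a.choose d) := by rw [hcm]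
    _ = a.choose d * (lam * (a + b).choose a) := by ring
    _ = a.choose d * ((n - t).choose (a - t) *
          (𝒜.filter fun H => Disjoint H HC).card) := by rw [h2]
    _ = (n - t).choose (a - t) * (a.choose d *
          (𝒜.filter fun H => Disjoint H HC).card) := by ring
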